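/- arXiv:1803.00374 — 3 statements merged into one kernel-verified Lean document; each statement's English description precedes it below -/
import Mathlib

section
/- Let Σ = !![σ, υ; υ, γ] be a real symmetric positive definite 2×2 matrix, S = !![1, 0; −υ/σ, 1], H a 2×2 complex matrix, and H̃ = H · S⁻¹, and assume H̃₁₁ ≠ 0. Define the unconditional Granger-causality value GC = log( Re((H Σ H*)₁₁) / (σ·|H̃₁₁|²) ). Then GC = log( 1 + (γ − υ²/σ)·|H̃₁₂|² / (σ·|H̃₁₁|²) ), and GC ≥ 0. -/
open Matrix

lemma inv_lower (a : ℂ) : (!![(1:ℂ), 0; a, 1])⁻¹ = !![(1:ℂ), 0; -a, 1] := by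
  apply Matrix.inv_eq_left_inv
  simp [Matrix.mul_fin_two, Matrix.one_fin_two]

/-- The unconditional Granger-causality value
`GC = log( Re((H Σ H*)₁₁) / (σ|H̃₁₁|²) )` equals
`log( 1 + (γ - υ²/σ)|H̃₁₂|² / (σ|H̃₁₁|²) )` and is nonnegative. -/
theorem unconditional_gc_formula_and_nonneg
    (σ υ γ : ℝ) (hσ : 0 < σ) (hγ : 0 < γ) (hdet : 0 < σ * γ - υ ^ 2)
    (H : Matrix (Fin 2) (Fin 2) ℂ) :
    let Cov : Matrix (Fin 2) (Fin 2) ℝ := !![σ, υ; υ, γ]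
    let S : Matrix (Fin 2) (Fin 2) ℝ := !![1, 0; -υ/σ, 1]
    let Ht : Matrix (Fin 2) (Fin 2) ℂ := H * (S.map (Complex.ofReal))⁻¹
    Ht 0 0 ≠ 0 →
    let GC : ℝ := Real.log (((H * Cov.map (Complex.ofReal) * Hᴴ) 0 0).re
      / (σ * ‖Ht 0 0‖ ^ 2))
    GC = Real.log (1 + (γ - υ ^ 2 / σ) * ‖Ht 0 1‖ ^ 2
        / (σ * ‖Ht 0 0‖ ^ 2)) ∧
    0 ≤ GC := by
  intro Cov S Ht hne GC
  have hσ' : (σ : ℝ) ≠ 0 := ne_of_gt hσ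
  have hSmap : S.map (Complex.ofReal) = !![(1:ℂ), 0; (-υ/σ : ℝ), 1] := by
    simp [S, Matrix.map]
    ext i j
    fin_cases i <;> fin_cases j <;> simp
  have hSinv : (S.map (Complex.ofReal))⁻¹ = !![(1:ℂ), 0; ((υ/σ : ℝ) : ℂ), 1] := by
    rw [hSmap]
    have := inv_lower ((-υ/σ : ℝ) : ℂ)
    push_cast at this ⊢
    convert this using 2
    ring
  have h00 : Ht 0 0 = H 0 0 + H 0 1 * ((υ/σ : ℝ) : ℂ) := by
    simp [Ht, hSinv, Matrix.mul_apply, Fin.sum_univ_two]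
  have h01 : Ht 0 1 = H 0 1 := by
    simp [Ht, hSinv, Matrix.mul_apply, Fin.sum_univ_two]
  -- key identity
  have key : ((H * Cov.map (Complex.ofReal) * Hᴴ) 0 0).re
      = σ * ‖Ht 0 0‖ ^ 2 + (γ - υ ^ 2 / σ) * ‖Ht 0 1‖ ^ 2 := by
    rw [h00, h01]
    simp only [Cov, Matrix.mul_apply, Fin.sum_univ_two, Matrix.conjTranspose_apply,
      Matrix.map_apply, Matrix.cons_val', Matrix.cons_val_zero, Matrix.cons_val_one,
      Matrix.head_cons, Matrix.empty_val', Matrix.cons_val_fin_one, Matrix.head_fin_const]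
    rw [← Complex.normSq_eq_norm_sq, ← Complex.normSq_eq_norm_sq]
    simp [Complex.normSq_apply, Complex.add_re, Complex.add_im, Complex.mul_re,
      Complex.mul_im, Complex.ofReal_re, Complex.ofReal_im]
    field_simp
    ring
  have habs : 0 < σ * ‖Ht 0 0‖ ^ 2 := by
    have : 0 < ‖Ht 0 0‖ := by
      simpa using (norm_pos_iff.mpr hne)
    positivity
  have hc : 0 ≤ (γ - υ ^ 2 / σ) * ‖Ht 0 1‖ ^ 2 := by
    have : 0 ≤ γ - υ ^ 2 / σ := by
      rw [sub_nonneg, div_le_iff₀ hσ]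
      nlinarith
    positivity
  have hratio : ((H * Cov.map (Complex.ofReal) * Hᴴ) 0 0).re
      / (σ * ‖Ht 0 0‖ ^ 2)
      = 1 + (γ - υ ^ 2 / σ) * ‖Ht 0 1‖ ^ 2 / (σ * ‖Ht 0 0‖ ^ 2) := by
    rw [key]
    field_simp
  constructor
  · simp only [GC, hratio]
  · simp only [GC, hratio]
    apply Real.log_nonneg
    have : 0 ≤ (γ - υ ^ 2 / σ) * ‖Ht 0 1‖ ^ 2 / (σ * ‖Ht 0 0‖ ^ 2) :=
      div_nonneg hc habs.le
    linarith
end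

section
/- Let Σ = !![σ, υ; υ, γ] be a real symmetric positive definite 2×2 matrix, S = !![1, 0; −υ/σ, 1], H a 2×2 complex matrix, and H̃ = H · S⁻¹, with H̃₁₁ ≠ 0. Then the unconditional Granger-causality value GC = log( Re((H Σ H*)₁₁) / (σ·|H̃₁₁|²) ) equals 0 if and only if H̃₁₂ = 0. -/
open Matrix

/-- The unconditional Granger-causality value
`GC = log( Re((H Σ H*)₁₁) / (σ|H̃₁₁|²) )` vanishes if and only if `H̃₁₂ = 0`. -/
theorem unconditional_gc_zero_iff
    (σ υ γ : ℝ) (hσ : 0 < σ) (hγ : 0 < γ) (hdet : 0 < σ * γ - υ ^ 2)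
    (H : Matrix (Fin 2) (Fin 2) ℂ) :
    let Cov : Matrix (Fin 2) (Fin 2) ℝ := !![σ, υ; υ, γ]
    let S : Matrix (Fin 2) (Fin 2) ℝ := !![1, 0; -υ/σ, 1]
    let Ht : Matrix (Fin 2) (Fin 2) ℂ := H * (S.map (Complex.ofReal))⁻¹
    Ht 0 0 ≠ 0 →
    (Real.log (((H * Cov.map (Complex.ofReal) * Hᴴ) 0 0).re
        / (σ * ‖Ht 0 0‖ ^ 2)) = 0 ↔ Ht 0 1 = 0) := by
  intro Cov S Ht h0
  have hσ' : σ ≠ 0 := ne_of_gt hσ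
  have hSinv : (S.map (Complex.ofReal))⁻¹ = !![1, 0; (υ/σ : ℂ), 1] := by
    apply inv_eq_right_inv
    ext i j
    fin_cases i <;> fin_cases j <;>
      simp [S, Matrix.mul_apply, Fin.sum_univ_two, Matrix.map_apply] <;>
      push_cast <;> field_simp <;> ring
  set a := H 0 0 with ha
  set b := H 0 1 with hb
  have hHt00 : Ht 0 0 = a + b * (υ/σ : ℂ) := by
    simp [Ht, hSinv, Matrix.mul_apply, Fin.sum_univ_two, ha, hb]
  have hHt01 : Ht 0 1 = b := by
    simp [Ht, hSinv, Matrix.mul_apply, Fin.sum_univ_two, hb]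
  have hN : ((H * Cov.map (Complex.ofReal) * Hᴴ) 0 0).re
      = σ * ‖Ht 0 0‖ ^ 2 + ((σ * γ - υ ^ 2)/σ) * Complex.normSq b := by
    rw [hHt00]
    simp only [Complex.sq_norm]
    simp [Cov, Matrix.mul_apply, Fin.sum_univ_two, Matrix.map_apply,
      Matrix.conjTranspose_apply, Complex.normSq_apply, Complex.add_re,
      Complex.add_im, Complex.mul_re, Complex.mul_im, ← ha, ← hb,
      Complex.div_re, Complex.div_im, Complex.normSq_ofReal]
    field_simp
    ring
  set D := σ * ‖Ht 0 0‖ ^ 2 with hD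
  have hDpos : 0 < D := by
    exact mul_pos hσ (pow_pos (norm_pos_iff.mpr h0) 2)
  have hc : 0 ≤ ((σ * γ - υ ^ 2)/σ) * Complex.normSq b := by
    apply mul_nonneg (le_of_lt (div_pos hdet hσ)) (Complex.normSq_nonneg b)
  rw [hN]
  constructor
  · intro hlog
    have h1 : (D + ((σ * γ - υ ^ 2)/σ) * Complex.normSq b) / D = 1 := by
      rcases Real.log_eq_zero.mp hlog with h | h | h
      · exfalso
        have : 0 < (D + ((σ * γ - υ ^ 2)/σ) * Complex.normSq b) / D :=
          div_pos (by linarith) hDpos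
        linarith [this, h]
      · exact h
      · exfalso
        have : 0 < (D + ((σ * γ - υ ^ 2)/σ) * Complex.normSq b) / D :=
          div_pos (by linarith) hDpos
        linarith [this, h]
    have h3 : ((σ * γ - υ ^ 2)/σ) * Complex.normSq b = 0 := by
      field_simp at h1 ⊢
      nlinarith [h1]
    have h4 : Complex.normSq b = 0 := by
      rcases mul_eq_zero.mp h3 with h | h
      · exfalso; exact (ne_of_gt (div_pos hdet hσ)) h
      · exact h
    rw [hHt01]
    exact Complex.normSq_eq_zero.mp h4
  · intro hb0
    rw [hHt01] at hb0
    rw [hb0]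
    simp [div_self (ne_of_gt hDpos)]
end

section
/- Let A = !![1/2, 1/2; 0, 0] and Σ = I₂ (2×2 real matrices). Then R₀ = !![5/3, 0; 0, 1] is the unique 2×2 real matrix satisfying the discrete Lyapunov equation R₀ = A · R₀ · Aᵀ + Σ (uniqueness holds since the eigenvalues of A are 0 and 1/2, so its spectral radius is less than one), and for every k ≥ 1 the lag-k autocovariance matrix R_k = A^k · R₀ is singular, i.e. det(A^k · R₀) = 0. -/
open Matrix

/-- For the VAR(1) with `A = !![1/2, 1/2; 0, 0]` and `Σ = I₂`, the matrix
`R₀ = !![5/3, 0; 0, 1]` is the unique solution of the discrete Lyapunov equation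
`R₀ = A R₀ Aᵀ + Σ` (the eigenvalues of `A` are `0` and `1/2`), and every lag-`k`
autocovariance `R_k = A^k R₀`, `k ≥ 1`, is singular: `det (A^k R₀) = 0`. -/
theorem var1_pathological_example_half :
    let A : Matrix (Fin 2) (Fin 2) ℝ := !![1/2, 1/2; 0, 0]
    let R₀ : Matrix (Fin 2) (Fin 2) ℝ := !![5/3, 0; 0, 1]
    R₀ = A * R₀ * Aᵀ + 1 ∧
    (∀ R : Matrix (Fin 2) (Fin 2) ℝ, R = A * R * Aᵀ + 1 → R = R₀) ∧
    (∀ k : ℕ, 1 ≤ k → (A ^ k * R₀).det = 0) := by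
  intro A R₀
  refine ⟨?_, ?_, ?_⟩
  · ext i j
    fin_cases i <;> fin_cases j <;>
      simp [A, R₀, Matrix.mul_apply, Matrix.one_apply, Fin.sum_univ_two,
        Matrix.transpose_apply, Matrix.vecHead, Matrix.vecTail, Matrix.vecMul, dotProduct] <;> norm_num
  · intro R hR
    have h00 := congrFun (congrFun hR 0) 0
    have h01 := congrFun (congrFun hR 0) 1
    have h10 := congrFun (congrFun hR 1) 0
    have h11 := congrFun (congrFun hR 1) 1
    simp [A, Matrix.mul_apply, Matrix.one_apply, Fin.sum_univ_two, Matrix.vecMul,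
      dotProduct, Matrix.vecHead, Matrix.vecTail] at h00 h01 h10 h11
    ext i j
    fin_cases i <;> fin_cases j <;> simp [R₀] <;> linarith
  · intro k hk
    have hA : A.det = 0 := by simp [A, Matrix.det_fin_two_of]
    rw [Matrix.det_mul, Matrix.det_pow, hA, zero_pow (by omega), zero_mul]
end
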